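/- arXiv:1604.06139 — 2 statements merged into one kernel-verified Lean document; each statement's English description precedes it below -/
import Mathlib

section
/- Let R be a convergent, forward-closed rewrite system, l1 → r1 a rule in R with l1|_p = σ(l2) for some position p ≠ ε, rule l2 → r2 ∈ R, and substitution σ. Then the sets of R-irreducible terms and of (R \ {l1 → r1})-irreducible terms coincide: IRR(R) = IRR(R \ {l1 → r1}). -/
/-! Basic first-order terms, positions, substitutions and rewriting. -/

inductive Term (F : Type) : Type
  | var : Nat → Term F
  | app : F → List (Term F) → Term F

namespace Term

def subst {F : Type} (σ : Nat → Term F) : Term F → Term F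
  | var n => σ n
  | app f ts => app f (ts.attach.map fun ⟨t, _⟩ => t.subst σ)

def root {F : Type} : Term F → Option F
  | var _ => none
  | app f _ => some f

def label {F : Type} : Term F → F ⊕ Nat
  | var n => Sum.inr n
  | app f _ => Sum.inl f

def IsVar {F : Type} : Term F → Prop
  | var _ => True
  | app _ _ => False

def varsL {F : Type} : Term F → List Nat
  | var n => [n]
  | app _ ts => (ts.attach.map fun ⟨t, _⟩ => t.varsL).flatten

end Term

abbrev Rule (F : Type) := Term F × Term F
abbrev TRS (F : Type) := Set (Rule F)

/-- `SubtermAt t p u` : the subterm of `t` at position `p` is `u`. -/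
inductive SubtermAt {F : Type} : Term F → List Nat → Term F → Prop
  | here (t : Term F) : SubtermAt t [] t
  | there {f : F} {ts : List (Term F)} {i : Nat} {u : Term F} {p : List Nat} {v : Term F} :
      ts[i]? = some u → SubtermAt u p v → SubtermAt (Term.app f ts) (i :: p) v

/-- `ReplaceAt t p v t'` : replacing the subterm of `t` at position `p` by `v` yields `t'`. -/
inductive ReplaceAt {F : Type} : Term F → List Nat → Term F → Term F → Prop
  | here (t u : Term F) : ReplaceAt t [] u u
  | there {f : F} {ts : List (Term F)} {i : Nat} {u : Term F} {p : List Nat} {v w : Term F} :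
      ts[i]? = some u → ReplaceAt u p v w →
      ReplaceAt (Term.app f ts) (i :: p) v (Term.app f (ts.set i w))

variable {F : Type}

/-- One rewrite step using the given rule (at some position, with some substitution). -/
def RuleStep (ρ : Rule F) (s t : Term F) : Prop :=
  ∃ (σ : Nat → Term F) (p : List Nat),
    SubtermAt s p (ρ.1.subst σ) ∧ ReplaceAt s p (ρ.2.subst σ) t

def OneStep (R : TRS F) (s t : Term F) : Prop := ∃ ρ ∈ R, RuleStep ρ s t

/-- A rewrite step at the root position. -/
def RootStep (R : TRS F) (s t : Term F) : Prop :=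
  ∃ ρ ∈ R, ∃ σ : Nat → Term F, s = ρ.1.subst σ ∧ t = ρ.2.subst σ

def StarRW (R : TRS F) : Term F → Term F → Prop := Relation.ReflTransGen (OneStep R)
def Plus (R : TRS F) : Term F → Term F → Prop := Relation.TransGen (OneStep R)
/-- Convertibility (the congruence / equational theory generated by `R`). -/
def Conv (R : TRS F) : Term F → Term F → Prop := Relation.EqvGen (OneStep R)
def Joinable (R : TRS F) (s t : Term F) : Prop := ∃ u, StarRW R s u ∧ StarRW R t u
def NormalForm (R : TRS F) (t : Term F) : Prop := ∀ u, ¬ OneStep R t u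
/-- `t` is the `R`-normal form of `s`. -/
def NFof (R : TRS F) (s t : Term F) : Prop := StarRW R s t ∧ NormalForm R t
def Terminating (R : TRS F) : Prop := WellFounded (fun a b : Term F => OneStep R b a)
def Confluent (R : TRS F) : Prop := ∀ s t u, StarRW R s t → StarRW R s u → Joinable R t u
def Convergent (R : TRS F) : Prop := Confluent R ∧ Terminating R

/-- every proper subterm is irreducible -/
def EpsIrreducible (R : TRS F) (t : Term F) : Prop :=
  ∀ p u, SubtermAt t p u → p ≠ [] → NormalForm R u

def InnermostRedex (R : TRS F) (t : Term F) : Prop :=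
  EpsIrreducible R t ∧ ¬ NormalForm R t

/-- Forward-closed, via the one-step-to-normal-form characterization. -/
def FCclosed (R : TRS F) : Prop :=
  ∀ t, InnermostRedex R t → ∀ u, NFof R t u → OneStep R t u

def Unifies (σ : Nat → Term F) (s t : Term F) : Prop := s.subst σ = t.subst σ

def IsMGU (σ : Nat → Term F) (s t : Term F) : Prop :=
  Unifies σ s t ∧ ∀ τ, Unifies τ s t → ∃ δ, ∀ x, τ x = (σ x).subst δ

def IsRenaming (ρ : Nat → Term F) : Prop :=
  ∃ f : Nat → Nat, Function.Injective f ∧ ∀ n, ρ n = Term.var (f n)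

/-- Redundancy criterion for an oriented equation `e` whose right-hand side is
reachable from its left-hand side: some proper subterm of the lhs is reducible. -/
def Redundant (R : TRS F) (e : Rule F) : Prop :=
  ∃ p u, p ≠ ([] : List Nat) ∧ SubtermAt e.1 p u ∧ ¬ NormalForm R u

/-- `R₁ ↝ R₂`: forward overlaps of rules of `R₂` (renamed apart) into
right-hand sides of rules of `R₁`, at non-variable positions, via an mgu. -/
def FStep (R₁ R₂ : TRS F) : TRS F :=
  { e | ∃ (l₁ r₁ l₂ r₂ : Term F) (ρ : Nat → Term F) (p : List Nat) (u : Term F)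
          (σ : Nat → Term F) (r₁' : Term F),
      (l₁, r₁) ∈ R₁ ∧ (l₂, r₂) ∈ R₂ ∧ IsRenaming ρ ∧
      SubtermAt r₁ p u ∧ ¬ u.IsVar ∧ IsMGU σ u (l₂.subst ρ) ∧
      ReplaceAt r₁ p (r₂.subst ρ) r₁' ∧ e = (l₁.subst σ, r₁'.subst σ) }

def FCiter (R : TRS F) : Nat → TRS F
  | 0 => R
  | k + 1 => FCiter R k ∪ { e | e ∈ FStep (FCiter R k) R ∧ ¬ Redundant (FCiter R k) e }

def FCinf (R : TRS F) : TRS F := ⋃ k, FCiter R k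

/-- Forward-closed, via the forward-closure construction: `FC(R) = R`. -/
def ForwardClosedFC (R : TRS F) : Prop := FCinf R = R

/-- `RHS(R)`: `R` together with the conclusions of right-hand-side critical
pair inferences (second rule renamed apart). -/
def RHSset (R : TRS F) : TRS F :=
  R ∪ { e | ∃ (s t u₀ v₀ : Term F) (ρ σ : Nat → Term F), (s, t) ∈ R ∧ (u₀, v₀) ∈ R ∧
        IsRenaming ρ ∧ IsMGU σ t (v₀.subst ρ) ∧
        s.subst σ ≠ (u₀.subst ρ).subst σ ∧ e = (s.subst σ, (u₀.subst ρ).subst σ) }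

/-- the (unordered) pairs of root symbols of two equations coincide -/
def RootPairSimilar (e₁ e₂ : Rule F) : Prop :=
  (e₁.1.root = e₂.1.root ∧ e₁.2.root = e₂.2.root) ∨
  (e₁.1.root = e₂.2.root ∧ e₁.2.root = e₂.1.root)

def QuasiDet (E : TRS F) : Prop :=
  (∀ e ∈ E, ¬ e.1.IsVar ∧ ¬ e.2.IsVar) ∧
  (∀ e ∈ E, e.1.root ≠ e.2.root) ∧
  (∀ e₁ ∈ E, ∀ e₂ ∈ E, e₁ ≠ e₂ → ¬ RootPairSimilar e₁ e₂)

def HasRootPairRepetition (E : TRS F) : Prop :=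
  ∃ e₁ ∈ E, ∃ e₂ ∈ E, e₁ ≠ e₂ ∧ RootPairSimilar e₁ e₂

def VarPreserving (R : TRS F) : Prop :=
  ∀ e ∈ R, ∀ n, n ∈ Term.varsL e.1 ↔ n ∈ Term.varsL e.2

def RightReduced (R : TRS F) : Prop := ∀ e ∈ R, NormalForm R e.2

def AlmostLeftReduced (R : TRS F) : Prop :=
  ¬ ∃ (l₁ r₁ l₂ r₂ : Term F) (p : List Nat) (u : Term F) (σ : Nat → Term F),
      (l₁, r₁) ∈ R ∧ (l₂, r₂) ∈ R ∧ p ≠ [] ∧ SubtermAt l₁ p u ∧ u = l₂.subst σ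

def NonSubtermCollapsing (R : TRS F) : Prop :=
  ¬ ∃ (t u : Term F) (p : List Nat), p ≠ [] ∧ SubtermAt u p t ∧ Conv R t u

structure LMSystem (R : TRS F) : Prop where
  convergent : Convergent R
  almostLeftReduced : AlmostLeftReduced R
  rightReduced : RightReduced R
  nonCollapsing : NonSubtermCollapsing R
  forwardClosed : FCclosed R
  quasiDet : QuasiDet (RHSset R)

/-- the symbol (function symbol or variable) of a term at a position, if defined -/
def labelAt {F : Type} : List Nat → Term F → Option (F ⊕ Nat)
  | [], t => some t.label
  | i :: p, Term.app _ ts => (ts[i]?).bind (labelAt p)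
  | _ :: _, Term.var _ => none

/-- outermost distinguishing position -/
def ODP (s t : Term F) (p : List Nat) : Prop :=
  (labelAt p s ≠ none ∨ labelAt p t ≠ none) ∧
  labelAt p s ≠ labelAt p t ∧
  ∀ q, q <+: p → q ≠ p → labelAt q s = labelAt q t



section AuxDel
variable {F : Type}

theorem subst_app' (σ : Nat → Term F) (f : F) (ts : List (Term F)) :
    Term.subst σ (Term.app f ts) = Term.app f (ts.map (Term.subst σ)) := by
  simp [Term.subst]

theorem subst_subst' (σ τ : Nat → Term F) : ∀ t : Term F,
    (t.subst τ).subst σ = t.subst (fun n => (τ n).subst σ)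
  | Term.var n => by simp [Term.subst]
  | Term.app f ts => by
    rw [subst_app', subst_app', subst_app', List.map_map]
    exact congrArg _ (List.map_congr_left fun t ht => subst_subst' σ τ t)
termination_by t => sizeOf t
decreasing_by
  have := List.sizeOf_lt_of_mem ht
  simp only [Term.app.sizeOf_spec]
  omega

theorem subtermAt_trans {a b c : Term F} {q p : List Nat}
    (h1 : SubtermAt a q b) (h2 : SubtermAt b p c) : SubtermAt a (q ++ p) c := by
  induction h1 with
  | here => simpa using h2
  | there hget _ ih => exact SubtermAt.there hget (ih h2)

theorem subtermAt_subst {a b : Term F} {p : List Nat} (σ : Nat → Term F)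
    (h : SubtermAt a p b) : SubtermAt (a.subst σ) p (b.subst σ) := by
  induction h with
  | here => exact SubtermAt.here _
  | there hget _ ih =>
    rw [subst_app']
    exact SubtermAt.there (by simp [hget]) ih

theorem replaceAt_exists {t v : Term F} {q : List Nat}
    (h : SubtermAt t q v) (w : Term F) : ∃ t', ReplaceAt t q w t' := by
  induction h with
  | here => exact ⟨w, ReplaceAt.here _ _⟩
  | there hget _ ih =>
    obtain ⟨t', ht'⟩ := ih
    exact ⟨_, ReplaceAt.there hget ht'⟩

end AuxDel

/-- under the hypotheses of rule deletion, the irreducible terms of `R`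
and of `R \ {l1 → r1}` coincide. -/
theorem delete_rule_same_irr {F : Type} (R : TRS F)
    (hconv : Convergent R) (hfc : FCclosed R)
    (l1 r1 l2 r2 : Term F) (h1 : (l1, r1) ∈ R) (h2 : (l2, r2) ∈ R)
    (hne : (l1, r1) ≠ (l2, r2))
    (p : List Nat) (u : Term F) (s : Nat → Term F)
    (hp : p ≠ []) (hsub : SubtermAt l1 p u) (hinst : u = l2.subst s) :
    { t : Term F | NormalForm R t } = { t : Term F | NormalForm (R \ {(l1, r1)}) t } := by
  ext t
  simp only [Set.mem_setOf_eq]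
  constructor
  · intro hnf v ⟨ρ, hρ, hstep⟩
    exact hnf v ⟨ρ, hρ.1, hstep⟩
  · intro hnf v ⟨ρ, hρ, σ', q, hsubq, _⟩
    by_cases hρe : ρ = (l1, r1)
    · subst hρe hinst
      have hsub2 : SubtermAt (l1.subst σ') p ((l2.subst s).subst σ') :=
        subtermAt_subst σ' hsub
      rw [subst_subst'] at hsub2
      have hsub3 : SubtermAt t (q ++ p) (l2.subst fun n => (s n).subst σ') :=
        subtermAt_trans hsubq hsub2
      obtain ⟨t', ht'⟩ := replaceAt_exists hsub3 (r2.subst fun n => (s n).subst σ')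
      exact hnf t' ⟨(l2, r2), ⟨h2, fun hmem => hne (Set.mem_singleton_iff.mp hmem).symm⟩,
        _, _, hsub3, ht'⟩
    · exact hnf v ⟨ρ, ⟨hρ, hρe⟩, σ', q, hsubq, ‹_›⟩
end

section
/- Let R be an LM-system, s = f(s1,…,sm) an innermost redex, and t = g(t1,…,tn) a term with all proper subterms irreducible, where f ≠ g. Then s and t are joinable modulo R if and only if exactly one of the following holds: (a) there is a unique rule l → r in R with root pair (f, g) such that s rewrites to t in one step by it; or (b) there are unique rules l1 → r1 and l2 → r2 with root pairs (f, h) and (g, h) for some symbol h such that s rewrites in one step by the first to some term t̂ and t rewrites in one step by the second to the same t̂. -/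
variable {F : Type}

/-! ### Auxiliary infrastructure -/

namespace Term
def size {F : Type} : Term F → Nat
  | var _ => 1
  | app _ ts => 1 + (ts.attach.map fun ⟨t, _⟩ => t.size).sum

theorem my_ind {F} {P : Term F → Prop}
    (hv : ∀ n, P (.var n)) (ha : ∀ f ts, (∀ t ∈ ts, P t) → P (.app f ts)) : ∀ t, P t := by
  intro t
  induction t using Term.rec (motive_2 := fun l => ∀ t ∈ l, P t) with
  | var n => exact hv n
  | app f ts ih => exact ha f ts ih
  | nil => rename_i t ht; cases ht
  | cons h t ih ih2 => rename_i x hx; rcases List.mem_cons.1 hx with rfl|hx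
                       · exact ih
                       · exact ih2 x hx

variable {F : Type}

@[simp] theorem subst_app (σ : Nat → Term F) (f : F) (ts : List (Term F)) :
    (app f ts).subst σ = app f (ts.map (subst σ)) := by simp [subst]
@[simp] theorem subst_var' (σ : Nat → Term F) (n : Nat) : (var n).subst σ = σ n := by simp [subst]
@[simp] theorem varsL_app (f : F) (ts : List (Term F)) :
    (app f ts).varsL = (ts.map varsL).flatten := by simp [varsL]
@[simp] theorem varsL_var (n : Nat) : (var n : Term F).varsL = [n] := by simp [varsL]
@[simp] theorem size_app (f : F) (ts : List (Term F)) :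
    (app f ts).size = 1 + (ts.map size).sum := by simp [size]
@[simp] theorem size_var (n : Nat) : (var n : Term F).size = 1 := by simp [size]

theorem subst_subst (σ τ : Nat → Term F) (t : Term F) :
    (t.subst σ).subst τ = t.subst (fun n => (σ n).subst τ) := by
  induction t using my_ind with
  | hv n => simp
  | ha f ts ih => simp [List.map_map]; exact fun t ht => ih t ht

theorem subst_id (t : Term F) : t.subst var = t := by
  induction t using my_ind with
  | hv n => simp
  | ha f ts ih =>
      simp only [subst_app]
      rw [show ts.map (subst var) = ts.map id from List.map_congr_left ih, List.map_id]

theorem subst_congr {σ τ : Nat → Term F} {t : Term F} (h : ∀ n ∈ t.varsL, σ n = τ n) :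
    t.subst σ = t.subst τ := by
  induction t using my_ind with
  | hv n => simpa using h n (by simp)
  | ha f ts ih =>
      simp only [subst_app]
      exact congrArg _ (List.map_congr_left fun u hu => ih u hu fun n hn =>
        h n (by simp [List.mem_flatten]; exact ⟨u, hu, hn⟩))

theorem mem_varsL_subst {σ : Nat → Term F} {t : Term F} {n : Nat} :
    n ∈ (t.subst σ).varsL ↔ ∃ m ∈ t.varsL, n ∈ (σ m).varsL := by
  induction t using my_ind with
  | hv k => simp
  | ha f ts ih =>
      simp only [subst_app, varsL_app, List.mem_flatten, List.mem_map, List.map_map]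
      constructor
      · rintro ⟨l, ⟨u, hu, rfl⟩, hn⟩
        rcases (ih u hu).1 hn with ⟨m, hm, hnm⟩
        exact ⟨m, ⟨u.varsL, ⟨u, hu, rfl⟩, hm⟩, hnm⟩
      · rintro ⟨m, ⟨l, ⟨u, hu, rfl⟩, hm⟩, hnm⟩
        exact ⟨(u.subst σ).varsL, ⟨u, hu, rfl⟩, (ih u hu).2 ⟨m, hm, hnm⟩⟩

theorem size_pos (t : Term F) : 0 < t.size := by
  cases t <;> simp

theorem size_subst_le {σ : Nat → Term F} {t : Term F} {x : Nat} (h : x ∈ t.varsL) :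
    (σ x).size ≤ (t.subst σ).size := by
  induction t using my_ind with
  | hv n => simp at h; subst h; simp
  | ha f ts ih =>
      simp only [varsL_app, List.mem_flatten, List.mem_map] at h
      rcases h with ⟨l, ⟨u, hu, rfl⟩, hx⟩
      calc (σ x).size ≤ (u.subst σ).size := ih u hu hx
        _ ≤ (ts.map (subst σ) |>.map size).sum := by
              exact List.single_le_sum (fun a _ => Nat.zero_le a) _
                (by simp; exact ⟨u, hu, rfl⟩)
        _ ≤ (app f ts |>.subst σ).size := by simp [List.map_map]

theorem size_subst_lt {σ : Nat → Term F} {f : F} {ts : List (Term F)} {x : Nat}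
    (h : x ∈ (app f ts).varsL) : (σ x).size < ((app f ts).subst σ).size := by
  simp only [varsL_app, List.mem_flatten, List.mem_map] at h
  rcases h with ⟨l, ⟨u, hu, rfl⟩, hx⟩
  have h1 : (σ x).size ≤ (u.subst σ).size := size_subst_le hx
  have h2 : (u.subst σ).size ≤ (ts.map (subst σ) |>.map size).sum :=
    List.single_le_sum (fun a _ => Nat.zero_le a) _ (by simp; exact ⟨u, hu, rfl⟩)
  simp only [subst_app, size_app, List.map_map] at *
  omega
end Term


open Term
variable {F : Type}

def UP (τ : Nat → Term F) (P : List (Term F × Term F)) : Prop :=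
  ∀ p ∈ P, p.1.subst τ = p.2.subst τ

def MguP (σ : Nat → Term F) (P : List (Term F × Term F)) : Prop :=
  UP σ P ∧ ∀ τ, UP τ P → ∃ δ, ∀ x, τ x = (σ x).subst δ

def varsP (P : List (Term F × Term F)) : Finset Nat :=
  (P.flatMap fun p => p.1.varsL ++ p.2.varsL).toFinset

def tsizeP (P : List (Term F × Term F)) : Nat :=
  (P.map fun p => p.1.size + p.2.size).sum

@[simp] theorem UP_cons {τ : Nat → Term F} {a b P} :
    UP τ ((a, b) :: P) ↔ a.subst τ = b.subst τ ∧ UP τ P := by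
  simp [UP]

@[simp] theorem varsP_cons {a b : Term F} {P} :
    varsP ((a, b) :: P) = a.varsL.toFinset ∪ b.varsL.toFinset ∪ varsP P := by
  simp [varsP, List.toFinset_append, Finset.union_assoc]

@[simp] theorem tsizeP_cons {a b : Term F} {P} :
    tsizeP ((a, b) :: P) = a.size + b.size + tsizeP P := by
  simp [tsizeP]

theorem varsP_mono {P Q : List (Term F × Term F)} (h : ∀ p ∈ P, p ∈ Q) :
    varsP P ⊆ varsP Q := by
  intro n hn
  simp only [varsP, List.mem_toFinset, List.mem_flatMap] at *
  obtain ⟨p, hp, hnp⟩ := hn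
  exact ⟨p, h p hp, hnp⟩

/-- the elimination substitution `[x ↦ t]` -/
def elimS (x : Nat) (t : Term F) : Nat → Term F := fun n => if n = x then t else var n

theorem elimS_subst_eq {τ : Nat → Term F} {x : Nat} {t : Term F}
    (h : τ x = t.subst τ) : ∀ u : Term F, (u.subst (elimS x t)).subst τ = u.subst τ := by
  intro u
  rw [subst_subst]
  apply subst_congr
  intro n _
  simp only [elimS]
  split
  · next he => subst he; exact h.symm
  · simp

theorem UP_elim {τ : Nat → Term F} {x : Nat} {t : Term F} {P}
    (h : UP τ ((var x, t) :: P)) :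
    UP τ (P.map fun p => (p.1.subst (elimS x t), p.2.subst (elimS x t))) := by
  have hx : τ x = t.subst τ := by simpa using (UP_cons.1 h).1
  intro p hp
  simp only [List.mem_map] at hp
  obtain ⟨q, hq, rfl⟩ := hp
  simp only
  rw [elimS_subst_eq hx, elimS_subst_eq hx]
  exact (UP_cons.1 h).2 q hq

theorem mguP_elim {x : Nat} {t : Term F} {P} (hx : x ∉ t.varsL) {μ : Nat → Term F}
    (hμ : MguP μ (P.map fun p => (p.1.subst (elimS x t), p.2.subst (elimS x t)))) :
    MguP (fun n => (elimS x t n).subst μ) ((var x, t) :: P) := by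
  have hts : t.subst (elimS x t) = t := by
    rw [show t.subst (elimS x t) = t.subst var from
      subst_congr fun n hn => by simp [elimS]; intro he; exact absurd (he ▸ hn) hx, subst_id]
  constructor
  · rw [UP_cons]
    constructor
    · show (var x : Term F).subst (fun n => (elimS x t n).subst μ)
          = t.subst fun n => (elimS x t n).subst μ
      rw [subst_var', ← subst_subst, hts]
      simp [elimS]
    · intro p hp
      have := hμ.1 _ (List.mem_map.2 ⟨p, hp, rfl⟩)
      simpa [← subst_subst] using this
  · intro τ hτ
    have hx' : τ x = t.subst τ := by simpa using (UP_cons.1 hτ).1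
    obtain ⟨δ, hδ⟩ := hμ.2 τ (UP_elim hτ)
    refine ⟨δ, fun y => ?_⟩
    show τ y = ((elimS x t y).subst μ).subst δ
    rw [subst_subst]
    rw [show (fun n => (μ n).subst δ) = τ from funext fun n => (hδ n).symm]
    by_cases hy : y = x
    · subst hy; simpa [elimS] using hx'
    · simp [elimS, hy]

theorem vars_subst_elim {x : Nat} {t u : Term F} (hx : x ∉ t.varsL) :
    (u.subst (elimS x t)).varsL.toFinset ⊆ (u.varsL.toFinset ∪ t.varsL.toFinset).erase x := by
  intro n hn
  simp only [List.mem_toFinset] at hn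
  obtain ⟨m, hm, hnm⟩ := mem_varsL_subst.1 hn
  by_cases hmx : m = x
  · subst hmx
    simp only [elimS, if_pos rfl] at hnm
    simp only [Finset.mem_erase, Finset.mem_union, List.mem_toFinset]
    exact ⟨fun he => hx (he ▸ hnm), Or.inr hnm⟩
  · simp only [elimS, if_neg hmx] at hnm
    simp only [varsL_var, List.mem_singleton] at hnm
    subst hnm
    simp only [Finset.mem_erase, Finset.mem_union, List.mem_toFinset]
    exact ⟨hmx, Or.inl hm⟩

theorem varsP_elim_subset {x : Nat} {t : Term F} {P} (hx : x ∉ t.varsL) :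
    varsP (P.map fun p => (p.1.subst (elimS x t), p.2.subst (elimS x t)))
      ⊆ (varsP ((var x, t) :: P)).erase x := by
  intro n hn
  simp only [varsP, List.mem_toFinset, List.mem_flatMap, List.mem_map] at hn
  obtain ⟨p, ⟨q, hq, rfl⟩, hnp⟩ := hn
  simp only [List.mem_append] at hnp
  have step : ∀ u : Term F, u = q.1 ∨ u = q.2 → n ∈ (u.subst (elimS x t)).varsL →
      n ∈ (varsP ((var x, t) :: P)).erase x := by
    intro u huq hu
    have h2 := vars_subst_elim (u := u) hx (List.mem_toFinset.2 hu)
    simp only [Finset.mem_erase, Finset.mem_union, List.mem_toFinset] at h2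
    obtain ⟨hnx, h3⟩ := h2
    refine Finset.mem_erase.2 ⟨hnx, ?_⟩
    simp only [varsP_cons, Finset.mem_union, List.mem_toFinset, varsL_var]
    rcases h3 with h3 | h3
    · right
      simp only [varsP, List.mem_toFinset, List.mem_flatMap]
      refine ⟨q, hq, List.mem_append.2 ?_⟩
      rcases huq with rfl | rfl
      exacts [Or.inl h3, Or.inr h3]
    · left; right; exact h3
  rcases hnp with h | h
  exacts [step q.1 (Or.inl rfl) h, step q.2 (Or.inr rfl) h]

@[simp] theorem UP_append {τ : Nat → Term F} {A B} : UP τ (A ++ B) ↔ UP τ A ∧ UP τ B := by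
  simp [UP, or_imp, forall_and]

theorem varsP_append {A B : List (Term F × Term F)} : varsP (A ++ B) = varsP A ∪ varsP B := by
  simp [varsP, List.toFinset_append]

theorem tsizeP_append {A B : List (Term F × Term F)} : tsizeP (A ++ B) = tsizeP A + tsizeP B := by
  simp [tsizeP]

theorem map_eq_map_iff_zip {g : Term F → Term F} :
    ∀ {ss ts : List (Term F)}, ss.length = ts.length →
      (ss.map g = ts.map g ↔ ∀ p ∈ ss.zip ts, g p.1 = g p.2) := by
  intro ss
  induction ss with
  | nil =>
      intro ts h
      cases ts with
      | nil => simp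
      | cons c cs => simp at h
  | cons a ss ih =>
      intro ts h
      cases ts with
      | nil => simp at h
      | cons b ts =>
          simp only [List.map_cons, List.zip_cons_cons, List.mem_cons, List.cons.injEq]
          rw [ih (by simpa using h)]
          constructor
          · rintro ⟨h1, h2⟩ p hp
            rcases hp with rfl | hp
            exacts [h1, h2 p hp]
          · intro h'
            exact ⟨h' _ (Or.inl rfl), fun p hp => h' p (Or.inr hp)⟩

theorem tsizeP_zip : ∀ {ss ts : List (Term F)}, ss.length = ts.length →
    tsizeP (ss.zip ts) = (ss.map Term.size).sum + (ts.map Term.size).sum := by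
  intro ss
  induction ss with
  | nil =>
      intro ts h
      cases ts with
      | nil => simp [tsizeP]
      | cons c cs => simp at h
  | cons a ss ih =>
      intro ts h
      cases ts with
      | nil => simp at h
      | cons b ts =>
          simp only [List.zip_cons_cons, tsizeP_cons, List.map_cons, List.sum_cons,
            ih (by simpa using h)]
          omega

theorem varsP_zip_subset {f g : F} {ss ts : List (Term F)} {P} :
    varsP (ss.zip ts) ⊆ varsP ((app f ss, app g ts) :: P) := by
  intro n hn
  simp only [varsP, List.mem_toFinset, List.mem_flatMap] at hn
  obtain ⟨p, hp, hnp⟩ := hn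
  obtain ⟨h1, h2⟩ := List.of_mem_zip hp
  simp only [varsP_cons, Finset.mem_union, List.mem_toFinset, varsL_app, List.mem_flatten,
    List.mem_map, List.mem_append] at *
  rcases hnp with h | h
  · exact Or.inl (Or.inl ⟨p.1.varsL, ⟨p.1, h1, rfl⟩, h⟩)
  · exact Or.inl (Or.inr ⟨p.2.varsL, ⟨p.2, h2, rfl⟩, h⟩)

def HasMgu (P : List (Term F × Term F)) : Prop := ∃ σ, MguP σ P

theorem mguP_nil : MguP (var : Nat → Term F) [] :=
  ⟨fun p hp => absurd hp List.not_mem_nil, fun τ _ => ⟨τ, fun x => by simp⟩⟩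

theorem mguP_cons_trivial {σ : Nat → Term F} {x : Nat} {P} (h : MguP σ P) :
    MguP σ ((var x, var x) :: P) :=
  ⟨UP_cons.2 ⟨rfl, h.1⟩, fun τ hτ => h.2 τ (UP_cons.1 hτ).2⟩

theorem mguP_decompose {σ : Nat → Term F} {f : F} {ss ts : List (Term F)} {P}
    (hlen : ss.length = ts.length) (h : MguP σ (ss.zip ts ++ P)) :
    MguP σ ((app f ss, app f ts) :: P) := by
  obtain ⟨h1, h2⟩ := h
  rw [UP_append] at h1
  constructor
  · rw [UP_cons]
    refine ⟨?_, h1.2⟩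
    simp only [subst_app]
    exact congrArg _ ((map_eq_map_iff_zip hlen).2 h1.1)
  · intro τ hτ
    rw [UP_cons] at hτ
    apply h2
    rw [UP_append]
    refine ⟨?_, hτ.2⟩
    have := hτ.1
    simp only [subst_app, Term.app.injEq, true_and] at this
    exact (map_eq_map_iff_zip hlen).1 this

theorem elim_var_head {n : Nat}
    (ihn : ∀ P : List (Term F × Term F), (varsP P).card < n → (∃ τ, UP τ P) → HasMgu P)
    {x : Nat} {b : Term F} {P} (hb : x ∉ b.varsL)
    (hcard : (varsP ((var x, b) :: P)).card ≤ n)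
    (hu : ∃ τ, UP τ ((var x, b) :: P)) : HasMgu ((var x, b) :: P) := by
  have hsub := varsP_elim_subset (P := P) hb
  have hxmem : x ∈ varsP ((var x, b) :: P) := by simp [varsP_cons]
  have hlt : (varsP (P.map fun p => (p.1.subst (elimS x b), p.2.subst (elimS x b)))).card < n :=
    lt_of_lt_of_le (lt_of_le_of_lt (Finset.card_le_card hsub)
      (Finset.card_erase_lt_of_mem hxmem)) hcard
  obtain ⟨τ, hτ⟩ := hu
  obtain ⟨μ, hμ⟩ := ihn _ hlt ⟨τ, UP_elim hτ⟩
  exact ⟨_, mguP_elim hb hμ⟩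

theorem no_unify_occurs {x : Nat} {f : F} {ts : List (Term F)} (h : x ∈ (app f ts).varsL) :
    ∀ τ : Nat → Term F, (var x : Term F).subst τ ≠ (app f ts).subst τ := by
  intro τ he
  have := size_subst_lt (σ := τ) h
  rw [← he] at this
  simp at this

theorem UP_swap {τ : Nat → Term F} {a b : Term F} {P} :
    UP τ ((a, b) :: P) ↔ UP τ ((b, a) :: P) := by
  rw [UP_cons, UP_cons, eq_comm]

theorem mguP_swap {σ : Nat → Term F} {a b : Term F} {P} (h : MguP σ ((a, b) :: P)) :
    MguP σ ((b, a) :: P) :=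
  ⟨UP_swap.1 h.1, fun τ hτ => h.2 τ (UP_swap.2 hτ)⟩

theorem varsP_swap {a b : Term F} {P} : varsP ((b, a) :: P) = varsP ((a, b) :: P) := by
  simp only [varsP_cons]
  rw [Finset.union_comm (b.varsL.toFinset)]

theorem unif_inner {n : Nat}
    (ihn : ∀ P : List (Term F × Term F), (varsP P).card < n → (∃ τ, UP τ P) → HasMgu P) :
    ∀ (s : Nat) (P : List (Term F × Term F)), (varsP P).card ≤ n → tsizeP P ≤ s →
      (∃ τ, UP τ P) → HasMgu P := by
  intro s
  induction s with
  | zero =>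
      intro P hc hs hu
      match P with
      | [] => exact ⟨var, mguP_nil⟩
      | (a, b) :: P' =>
          exfalso
          have := size_pos a
          have := size_pos b
          simp only [tsizeP_cons] at hs
          omega
  | succ s ihs =>
      intro P hc hs hu
      match P with
      | [] => exact ⟨var, mguP_nil⟩
      | (Term.var x, b) :: P' =>
          by_cases hb : b = var x
          · subst hb
            have h1 : (varsP P').card ≤ n :=
              le_trans (Finset.card_le_card (varsP_mono fun p hp => List.mem_cons_of_mem _ hp)) hc
            have h2 : tsizeP P' ≤ s := by simp only [tsizeP_cons, size_var] at hs; omega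
            obtain ⟨σ, hσ⟩ := ihs P' h1 h2 (hu.imp fun τ h => (UP_cons.1 h).2)
            exact ⟨σ, mguP_cons_trivial hσ⟩
          · have hxb : x ∉ b.varsL := by
              cases b with
              | var y =>
                  intro hy
                  simp only [varsL_var, List.mem_singleton] at hy
                  exact hb (by rw [hy])
              | app g ts =>
                  intro hy
                  obtain ⟨τ, hτ⟩ := hu
                  exact no_unify_occurs hy τ (UP_cons.1 hτ).1
            exact elim_var_head ihn hxb hc hu
      | (Term.app f ss, Term.var x) :: P' =>
          have hu' : ∃ τ, UP τ ((var x, app f ss) :: P') := hu.imp fun τ h => UP_swap.1 h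
          have hc' : (varsP ((var x, app f ss) :: P')).card ≤ n := by
            rw [varsP_swap]; exact hc
          have hxb : x ∉ (app f ss).varsL := by
            intro hy
            obtain ⟨τ, hτ⟩ := hu'
            exact no_unify_occurs hy τ (UP_cons.1 hτ).1
          obtain ⟨σ, hσ⟩ := elim_var_head ihn hxb hc' hu'
          exact ⟨σ, mguP_swap hσ⟩
      | (Term.app f ss, Term.app g ts) :: P' =>
          obtain ⟨τ, hτ⟩ := hu
          have h1 := (UP_cons.1 hτ).1
          simp only [subst_app, Term.app.injEq] at h1
          obtain ⟨rfl, hmap⟩ := h1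
          have hlen : ss.length = ts.length := by
            have := congrArg List.length hmap
            simpa using this
          have hcQ : varsP (ss.zip ts ++ P') ⊆ varsP ((app f ss, app f ts) :: P') := by
            rw [varsP_append]
            apply Finset.union_subset varsP_zip_subset
            exact varsP_mono fun p hp => List.mem_cons_of_mem _ hp
          have hsQ : tsizeP (ss.zip ts ++ P') ≤ s := by
            rw [tsizeP_append, tsizeP_zip hlen]
            simp only [tsizeP_cons, size_app] at hs
            omega
          have huQ : ∃ τ', UP τ' (ss.zip ts ++ P') :=
            ⟨τ, UP_append.2 ⟨(map_eq_map_iff_zip hlen).1 hmap, (UP_cons.1 hτ).2⟩⟩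
          obtain ⟨σ, hσ⟩ := ihs _ (le_trans (Finset.card_le_card hcQ) hc) hsQ huQ
          exact ⟨σ, mguP_decompose hlen hσ⟩

theorem hasMgu_of_unifiable (P : List (Term F × Term F)) (hu : ∃ τ, UP τ P) : HasMgu P := by
  suffices h : ∀ n (Q : List (Term F × Term F)), (varsP Q).card ≤ n → (∃ τ, UP τ Q) → HasMgu Q from
    h (varsP P).card P le_rfl hu
  intro n
  induction n using Nat.strong_induction_on with
  | _ n ih =>
      intro Q hc huQ
      exact unif_inner (fun P' h' => ih (varsP P').card h' P' le_rfl)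
        (tsizeP Q) Q hc le_rfl huQ


section Rewriting
open Term
variable {F : Type}

@[simp] theorem Term.root_app (f : F) (ts : List (Term F)) :
    (Term.app f ts).root = some f := by simp [Term.root]
@[simp] theorem Term.root_var (n : Nat) : (Term.var n : Term F).root = none := by simp [Term.root]
@[simp] theorem Term.isVar_var (n : Nat) : (Term.var n : Term F).IsVar := by simp [Term.IsVar]
@[simp] theorem Term.not_isVar_app (f : F) (ts : List (Term F)) :
    ¬ (Term.app f ts : Term F).IsVar := by simp [Term.IsVar]

theorem root_subst {l : Term F} (hl : ¬ l.IsVar) (σ : Nat → Term F) :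
    (l.subst σ).root = l.root := by
  cases l with
  | var n => exact absurd (Term.isVar_var n) hl
  | app f ts => simp

theorem nonvar_subst {l : Term F} (hl : ¬ l.IsVar) (σ : Nat → Term F) :
    ¬ (l.subst σ).IsVar := by
  cases l with
  | var n => exact absurd (Term.isVar_var n) hl
  | app f ts => simp

theorem le_foldr_max : ∀ {l : List Nat}, ∀ n ∈ l, n ≤ l.foldr max 0 := by
  intro l
  induction l with
  | nil => simp
  | cons a l ih =>
      intro n hn
      rcases List.mem_cons.1 hn with rfl | hn
      · exact le_max_left _ _
      · exact le_trans (ih n hn) (le_max_right _ _)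

theorem oneStep_instance {R : TRS F} {e : Rule F} (he : e ∈ R) (ν : Nat → Term F) :
    OneStep R (e.1.subst ν) (e.2.subst ν) :=
  ⟨e, he, ν, [], SubtermAt.here _, ReplaceAt.here _ _⟩

theorem subtermAt_nil {t u : Term F} (h : SubtermAt t [] u) : u = t := by cases h; rfl

theorem replaceAt_nil {t v u : Term F} (h : ReplaceAt t [] v u) : u = v := by cases h; rfl

theorem rootStep_of_eps {R : TRS F} {e : Rule F} {s t : Term F} (he : e ∈ R)
    (hs : EpsIrreducible R s) (h : RuleStep e s t) :
    ∃ σ, s = e.1.subst σ ∧ t = e.2.subst σ := by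
  obtain ⟨σ, p, h1, h2⟩ := h
  by_cases hp : p = []
  · subst hp
    exact ⟨σ, (subtermAt_nil h1).symm, replaceAt_nil h2⟩
  · exact absurd (oneStep_instance he σ) (hs p _ h1 hp _)

theorem star_eq_of_nf {R : TRS F} {u v : Term F} (hu : NormalForm R u) (h : StarRW R u v) :
    v = u := by
  induction h with
  | refl => rfl
  | tail h1 h2 ih =>
      rw [ih] at h2
      exact absurd h2 (hu _)

theorem exists_nf {R : TRS F} (hT : Terminating R) (s : Term F) : ∃ u, NFof R s u := by
  refine hT.induction (C := fun s => ∃ u, NFof R s u) s ?_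
  intro s ih
  by_cases h : NormalForm R s
  · exact ⟨s, Relation.ReflTransGen.refl, h⟩
  · simp only [NormalForm, not_forall, not_not] at h
    obtain ⟨t, ht⟩ := h
    obtain ⟨u, hu1, hu2⟩ := ih t ht
    exact ⟨u, Relation.ReflTransGen.head ht hu1, hu2⟩

theorem nf_of_joinable {R : TRS F} (hC : Confluent R) {s t u : Term F}
    (hj : Joinable R s t) (hu : NFof R s u) : NFof R t u := by
  obtain ⟨v, hsv, htv⟩ := hj
  obtain ⟨w, hvw, huw⟩ := hC s v u hsv hu.1
  have hwu : w = u := star_eq_of_nf hu.2 huw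
  subst hwu
  exact ⟨htv.trans hvw, hu.2⟩

theorem rule_nonvar {R : TRS F} (h : QuasiDet (RHSset R)) {e : Rule F} (he : e ∈ R) :
    ¬ e.1.IsVar ∧ ¬ e.2.IsVar :=
  h.1 e (Set.mem_union_left _ he)

theorem rule_unique {R : TRS F} (h : QuasiDet (RHSset R)) {e e' : Rule F}
    (he : e ∈ R) (he' : e' ∈ R)
    (h1 : e.1.root = e'.1.root) (h2 : e.2.root = e'.2.root) : e = e' := by
  by_contra hne
  exact h.2.2 e (Set.mem_union_left _ he) e' (Set.mem_union_left _ he') hne (Or.inl ⟨h1, h2⟩)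

theorem no_fg_rule {R : TRS F} (hlm : LMSystem R) {e₁ e₂ : Rule F} (he₁ : e₁ ∈ R) (he₂ : e₂ ∈ R)
    {σ₁ σ₂ : Nat → Term F} {f g : F}
    (hf : e₁.1.root = some f) (hg : e₂.1.root = some g)
    (heq : e₁.2.subst σ₁ = e₂.2.subst σ₂)
    (hne : e₁.1.subst σ₁ ≠ e₂.1.subst σ₂) :
    ∀ e ∈ R, ¬(e.1.root = some f ∧ e.2.root = some g) := by
  rintro e he ⟨hef, heg⟩
  set N := ((e₁.1.varsL ++ e₁.2.varsL).foldr max 0) with hN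
  set ρ : Nat → Term F := fun n => Term.var (n + (N + 1)) with hρ
  set τ : Nat → Term F := fun y => if N + 1 ≤ y then σ₂ (y - (N + 1)) else σ₁ y with hτ
  have hτ₁ : ∀ t : Term F, (∀ n ∈ t.varsL, n ∈ (e₁.1.varsL ++ e₁.2.varsL)) →
      t.subst τ = t.subst σ₁ := by
    intro t h
    apply Term.subst_congr
    intro n hn
    have := le_foldr_max _ (h n hn)
    simp only [hτ]
    rw [if_neg (by omega)]
  have hτ₂ : ∀ t : Term F, (t.subst ρ).subst τ = t.subst σ₂ := by
    intro t
    rw [Term.subst_subst]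
    apply Term.subst_congr
    intro n _
    simp only [hρ, hτ, Term.subst_var']
    rw [if_pos (by omega), Nat.add_sub_cancel]
  have hτu : UP τ [(e₁.2, e₂.2.subst ρ)] := by
    intro p hp
    rw [List.mem_singleton.1 hp]
    show e₁.2.subst τ = (e₂.2.subst ρ).subst τ
    rw [hτ₂, hτ₁ e₁.2 (fun n hn => List.mem_append.2 (Or.inr hn)), heq]
  obtain ⟨μ, hμ⟩ := hasMgu_of_unifiable _ ⟨τ, hτu⟩
  have hμ1 : Unifies μ e₁.2 (e₂.2.subst ρ) := hμ.1 (e₁.2, e₂.2.subst ρ) (List.mem_singleton_self _)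
  have hμ2 : IsMGU μ e₁.2 (e₂.2.subst ρ) := by
    refine ⟨hμ1, fun τ' hτ' => hμ.2 τ' ?_⟩
    intro p hp
    rw [List.mem_singleton.1 hp]
    exact hτ'
  have hside : e₁.1.subst μ ≠ (e₂.1.subst ρ).subst μ := by
    intro hcon
    obtain ⟨δ, hδ⟩ := hμ.2 τ hτu
    have h1 : e₁.1.subst τ = (e₂.1.subst ρ).subst τ := by
      rw [show τ = fun x => (μ x).subst δ from funext hδ]
      rw [← Term.subst_subst, ← Term.subst_subst, hcon]
    rw [hτ₂, hτ₁ e₁.1 (fun n hn => List.mem_append.2 (Or.inl hn))] at h1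
    exact hne h1
  have hE₀ : (e₁.1.subst μ, (e₂.1.subst ρ).subst μ) ∈ RHSset R := by
    refine Set.mem_union_right _ ?_
    exact ⟨e₁.1, e₁.2, e₂.1, e₂.2, ρ, μ, by rw [Prod.mk.eta]; exact he₁,
      by rw [Prod.mk.eta]; exact he₂,
      ⟨fun n => n + (N + 1), fun a b hab => Nat.add_right_cancel hab, fun n => rfl⟩, hμ2, hside, rfl⟩
  have hred : OneStep R ((e₂.1.subst ρ).subst μ) ((e₂.2.subst ρ).subst μ) := by
    rw [Term.subst_subst, Term.subst_subst]
    exact oneStep_instance he₂ _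
  have hnv₁ := rule_nonvar hlm.quasiDet he₁
  have hnv₂ := rule_nonvar hlm.quasiDet he₂
  have hEne : e ≠ (e₁.1.subst μ, (e₂.1.subst ρ).subst μ) := by
    intro hcon
    have hnf := hlm.rightReduced e he
    rw [hcon] at hnf
    exact hnf _ hred
  apply hlm.quasiDet.2.2 e (Set.mem_union_left _ he) _ hE₀ hEne
  left
  constructor
  · show e.1.root = (e₁.1.subst μ).root
    rw [hef, root_subst hnv₁.1, hf]
  · show e.2.root = ((e₂.1.subst ρ).subst μ).root
    rw [heg, root_subst (nonvar_subst hnv₂.1 ρ), root_subst hnv₂.1, hg]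

end Rewriting

/-- joinability of an innermost redex and an epsilon-bar-irreducible term
with distinct root symbols holds iff exactly one of the two described cases holds. -/
theorem joinable_exactly_two {F : Type} (R : TRS F) (hlm : LMSystem R)
    (f g : F) (ss ts : List (Term F)) (hfg : f ≠ g)
    (hs : InnermostRedex R (Term.app f ss))
    (ht : EpsIrreducible R (Term.app g ts)) :
    Joinable R (Term.app f ss) (Term.app g ts) ↔
      Xor'
        (∃! e : Rule F, e ∈ R ∧ e.1.root = some f ∧ e.2.root = some g ∧
          RuleStep e (Term.app f ss) (Term.app g ts))
        (∃ (h : F) (that : Term F),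
          (∃! e : Rule F, e ∈ R ∧ e.1.root = some f ∧ e.2.root = some h ∧
            RuleStep e (Term.app f ss) that) ∧
          (∃! e : Rule F, e ∈ R ∧ e.1.root = some g ∧ e.2.root = some h ∧
            RuleStep e (Term.app g ts) that)) := by
  obtain ⟨hconf, hterm⟩ := hlm.convergent
  constructor
  · intro hj
    obtain ⟨u, hsu, hunf⟩ := exists_nf hterm (Term.app f ss)
    have htu : NFof R (Term.app g ts) u := nf_of_joinable hconf hj ⟨hsu, hunf⟩
    by_cases htn : NormalForm R (Term.app g ts)
    · have hut : u = Term.app g ts := star_eq_of_nf htn htu.1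
      subst hut
      obtain ⟨e, he, hrs⟩ := hlm.forwardClosed _ hs _ ⟨hsu, hunf⟩
      obtain ⟨σ, hse, hte⟩ := rootStep_of_eps he hs.1 hrs
      have hnv := rule_nonvar hlm.quasiDet he
      have hf : e.1.root = some f := by rw [← root_subst hnv.1 σ, ← hse]; simp
      have hg : e.2.root = some g := by rw [← root_subst hnv.2 σ, ← hte]; simp
      refine Or.inl ⟨⟨e, ⟨he, hf, hg, hrs⟩, ?_⟩, ?_⟩
      · rintro e' ⟨he', hf', hg', -⟩
        exact rule_unique hlm.quasiDet he' he (hf'.trans hf.symm) (hg'.trans hg.symm)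
      · rintro ⟨h, that, -, ⟨e₂, ⟨he₂, -, -, hstep₂⟩, -⟩⟩
        exact htn that ⟨e₂, he₂, hstep₂⟩
    · have htir : InnermostRedex R (Term.app g ts) := ⟨ht, htn⟩
      obtain ⟨e₂, he₂, hrs₂⟩ := hlm.forwardClosed _ htir _ htu
      obtain ⟨σ₂, ht₂, hu₂⟩ := rootStep_of_eps he₂ ht hrs₂
      obtain ⟨e₁, he₁, hrs₁⟩ := hlm.forwardClosed _ hs _ ⟨hsu, hunf⟩
      obtain ⟨σ₁, hs₁, hu₁⟩ := rootStep_of_eps he₁ hs.1 hrs₁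
      have hnv₁ := rule_nonvar hlm.quasiDet he₁
      have hnv₂ := rule_nonvar hlm.quasiDet he₂
      have hf₁ : e₁.1.root = some f := by rw [← root_subst hnv₁.1 σ₁, ← hs₁]; simp
      have hg₂ : e₂.1.root = some g := by rw [← root_subst hnv₂.1 σ₂, ← ht₂]; simp
      have hru₁ : u.root = e₁.2.root := by rw [hu₁]; exact root_subst hnv₁.2 σ₁
      have hru₂ : u.root = e₂.2.root := by rw [hu₂]; exact root_subst hnv₂.2 σ₂
      obtain ⟨k, hk₁⟩ : ∃ k, e₁.2.root = some k := by
        cases he12 : e₁.2 with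
        | var n => rw [he12] at hnv₁; exact absurd (Term.isVar_var n) hnv₁.2
        | app k' us => exact ⟨k', by simp⟩
      have hk₂ : e₂.2.root = some k := by rw [← hru₂, hru₁, hk₁]
      refine Or.inr ⟨⟨k, u, ⟨e₁, ⟨he₁, hf₁, hk₁, hrs₁⟩, ?_⟩, ⟨e₂, ⟨he₂, hg₂, hk₂, hrs₂⟩, ?_⟩⟩, ?_⟩
      · rintro e' ⟨he', hf', hk', -⟩
        exact rule_unique hlm.quasiDet he' he₁ (hf'.trans hf₁.symm) (hk'.trans hk₁.symm)
      · rintro e' ⟨he', hg', hk', -⟩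
        exact rule_unique hlm.quasiDet he' he₂ (hg'.trans hg₂.symm) (hk'.trans hk₂.symm)
      · rintro ⟨e, ⟨he, hef, heg, -⟩, -⟩
        refine no_fg_rule hlm he₁ he₂ hf₁ hg₂ (by rw [← hu₁, ← hu₂]) ?_ e he ⟨hef, heg⟩
        rw [← hs₁, ← ht₂]
        intro hcon
        exact hfg (by injection hcon)
  · rintro (⟨⟨e, ⟨he, -, -, hrs⟩, -⟩, -⟩ |
      ⟨⟨h, that, ⟨e₁, ⟨he₁, -, -, h₁⟩, -⟩, ⟨e₂, ⟨he₂, -, -, h₂⟩, -⟩⟩, -⟩)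
    · exact ⟨Term.app g ts, Relation.ReflTransGen.single ⟨e, he, hrs⟩, Relation.ReflTransGen.refl⟩
    · exact ⟨that, Relation.ReflTransGen.single ⟨e₁, he₁, h₁⟩,
        Relation.ReflTransGen.single ⟨e₂, he₂, h₂⟩⟩
end
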